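/- For every R > 0 there exists a constant c > 0 (depending only on R) such that the following holds: for every positive integer d, every n ≥ 2, every δ ≥ 0, and all points x₁, …, x_{n+1} ∈ ℝ^d with ‖x_i‖ ≤ R for all i, the regularized empirical covariance matrices Σ_n = (1/(n−1)) ∑_{i=1}^{n} (x_i − x̄_n)(x_i − x̄_n)ᵀ + δ I (where x̄_n = (1/n) ∑_{i=1}^{n} x_i) satisfy ‖Σ_{n+1} − Σ_n‖ ≤ c/n, where ‖·‖ is the operator norm. -/

import Mathlib

open Finset Matrix

/-- The Euclidean norm on `ℝ^d`. -/
noncomputable def eucNorm {d : ℕ} (y : Fin d → ℝ) : ℝ :=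
  Real.sqrt (∑ j, y j ^ 2)

/-- The empirical mean of the first `n` points. -/
noncomputable def empMean (d n : ℕ) (x : ℕ → Fin d → ℝ) : Fin d → ℝ :=
  (n : ℝ)⁻¹ • ∑ i ∈ Finset.range n, x i

/-- The regularized empirical covariance
`Σ_n = (1/(n−1)) ∑_{i=1}^n (x_i − x̄_n)(x_i − x̄_n)ᵀ + δ I`. -/
noncomputable def empCov (d n : ℕ) (δ : ℝ) (x : ℕ → Fin d → ℝ) :
    Matrix (Fin d) (Fin d) ℝ :=
  ((n : ℝ) - 1)⁻¹ •
      (∑ i ∈ Finset.range n,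
        Matrix.vecMulVec (x i - empMean d n x) (x i - empMean d n x)) +
    δ • 1

/-- The `ℓ²` operator norm of a real matrix. -/
noncomputable def opNorm {d : ℕ} (M : Matrix (Fin d) (Fin d) ℝ) : ℝ :=
  ‖Matrix.toEuclideanCLM (𝕜 := ℝ) (n := Fin d) M‖

open scoped Matrix.Norms.L2Operator

lemma opNorm_eq {d : ℕ} (M : Matrix (Fin d) (Fin d) ℝ) : opNorm M = ‖M‖ := rfl

noncomputable def toE {d : ℕ} : (Fin d → ℝ) ≃ₗ[ℝ] EuclideanSpace ℝ (Fin d) :=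
  (WithLp.linearEquiv 2 ℝ (Fin d → ℝ)).symm

lemma eucNorm_eq {d : ℕ} (y : Fin d → ℝ) : eucNorm y = ‖toE y‖ := by
  rw [EuclideanSpace.norm_eq]
  unfold eucNorm
  congr 1
  refine Finset.sum_congr rfl fun j _ => ?_
  rw [Real.norm_eq_abs, sq_abs]
  rfl

lemma eucNorm_nonneg {d : ℕ} (y : Fin d → ℝ) : 0 ≤ eucNorm y := by
  rw [eucNorm_eq]; positivity

lemma eucNorm_smul {d : ℕ} (a : ℝ) (y : Fin d → ℝ) :
    eucNorm (a • y) = |a| * eucNorm y := by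
  rw [eucNorm_eq, _root_.map_smul, norm_smul, Real.norm_eq_abs, eucNorm_eq]

lemma eucNorm_sub_le {d : ℕ} (y z : Fin d → ℝ) :
    eucNorm (y - z) ≤ eucNorm y + eucNorm z := by
  rw [eucNorm_eq, eucNorm_eq, eucNorm_eq, map_sub]
  exact norm_sub_le _ _

lemma eucNorm_sum_le {d : ℕ} (s : Finset ℕ) (f : ℕ → Fin d → ℝ) :
    eucNorm (∑ i ∈ s, f i) ≤ ∑ i ∈ s, eucNorm (f i) := by
  rw [eucNorm_eq, map_sum]
  exact (norm_sum_le _ _).trans_eq (Finset.sum_congr rfl fun i _ => (eucNorm_eq _).symm)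

lemma vmv_mulVec {d : ℕ} (y z w : Fin d → ℝ) :
    vecMulVec y z *ᵥ w = (z ⬝ᵥ w) • y := by
  funext i
  simp [vecMulVec, mulVec, dotProduct, Finset.sum_mul, Finset.mul_sum, mul_assoc, mul_comm,
    mul_left_comm]

lemma opNorm_vecMulVec {d : ℕ} (y z : Fin d → ℝ) :
    opNorm (vecMulVec y z) ≤ eucNorm y * eucNorm z := by
  unfold opNorm
  refine ContinuousLinearMap.opNorm_le_bound _
    (mul_nonneg (eucNorm_nonneg y) (eucNorm_nonneg z)) fun v => ?_
  have h1 : toEuclideanCLM (𝕜 := ℝ) (vecMulVec y z) v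
      = toE ((z ⬝ᵥ (WithLp.equiv 2 (Fin d → ℝ) v)) • y) := by
    conv_lhs => rw [← (WithLp.equiv 2 (Fin d → ℝ)).symm_apply_apply v]
    rw [WithLp.equiv_symm_apply, toEuclideanCLM_toLp, vmv_mulVec]
    rfl
  rw [h1, _root_.map_smul, norm_smul, Real.norm_eq_abs, ← eucNorm_eq]
  have h2 : z ⬝ᵥ (WithLp.equiv 2 (Fin d → ℝ) v) = inner (𝕜 := ℝ) (toE z) v := by
    simp [dotProduct, PiLp.inner_apply, RCLike.inner_apply]
    exact Finset.sum_congr rfl fun j _ => mul_comm _ _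
  rw [h2]
  calc |inner (𝕜 := ℝ) (toE z) v| * eucNorm y ≤ ‖toE z‖ * ‖v‖ * eucNorm y := by
        gcongr
        · exact eucNorm_nonneg y
        · exact abs_real_inner_le_norm _ _
    _ = eucNorm y * eucNorm z * ‖v‖ := by rw [eucNorm_eq z]; ring

lemma norm_vecMulVec_le {d : ℕ} (y z : Fin d → ℝ) :
    ‖vecMulVec y z‖ ≤ eucNorm y * eucNorm z := by
  rw [← opNorm_eq]; exact opNorm_vecMulVec y z

lemma vmv_sub_left {d : ℕ} (a b c : Fin d → ℝ) :
    vecMulVec (a - b) c = vecMulVec a c - vecMulVec b c := by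
  ext i j; simp [vecMulVec, sub_mul]

lemma vmv_sub_right {d : ℕ} (a b c : Fin d → ℝ) :
    vecMulVec a (b - c) = vecMulVec a b - vecMulVec a c := by
  ext i j; simp [vecMulVec, mul_sub]

lemma vmv_smul_left {d : ℕ} (r : ℝ) (a c : Fin d → ℝ) :
    vecMulVec (r • a) c = r • vecMulVec a c := by
  ext i j; simp [vecMulVec]; ring

lemma vmv_smul_right {d : ℕ} (r : ℝ) (a c : Fin d → ℝ) :
    vecMulVec a (r • c) = r • vecMulVec a c := by
  ext i j; simp [vecMulVec]; ring

lemma vmv_sum_left {d : ℕ} (s : Finset ℕ) (f : ℕ → Fin d → ℝ) (c : Fin d → ℝ) :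
    vecMulVec (∑ i ∈ s, f i) c = ∑ i ∈ s, vecMulVec (f i) c := by
  ext i j; simp [vecMulVec, Matrix.sum_apply, Finset.sum_apply, Finset.sum_mul]

lemma vmv_sum_right {d : ℕ} (s : Finset ℕ) (f : ℕ → Fin d → ℝ) (c : Fin d → ℝ) :
    vecMulVec c (∑ i ∈ s, f i) = ∑ i ∈ s, vecMulVec c (f i) := by
  ext i j; simp [vecMulVec, Matrix.sum_apply, Finset.sum_apply, Finset.mul_sum]

lemma sum_empMean {d n : ℕ} (hn : n ≠ 0) (x : ℕ → Fin d → ℝ) :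
    ∑ i ∈ Finset.range n, x i = (n : ℝ) • empMean d n x := by
  unfold empMean
  rw [smul_smul, mul_inv_cancel₀ (Nat.cast_ne_zero.2 hn), one_smul]

lemma sum_centered {d n : ℕ} (hn : n ≠ 0) (x : ℕ → Fin d → ℝ) :
    ∑ i ∈ Finset.range n,
        Matrix.vecMulVec (x i - empMean d n x) (x i - empMean d n x)
      = (∑ i ∈ Finset.range n, Matrix.vecMulVec (x i) (x i))
        - (n : ℝ) • Matrix.vecMulVec (empMean d n x) (empMean d n x) := by
  set m := empMean d n x with hm
  have expand : ∀ i, Matrix.vecMulVec (x i - m) (x i - m)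
      = Matrix.vecMulVec (x i) (x i) - Matrix.vecMulVec (x i) m
        - Matrix.vecMulVec m (x i) + Matrix.vecMulVec m m := by
    intro i
    rw [vmv_sub_left, vmv_sub_right, vmv_sub_right]
    abel
  simp only [expand]
  rw [Finset.sum_add_distrib, Finset.sum_sub_distrib, Finset.sum_sub_distrib,
    ← vmv_sum_left, ← vmv_sum_right, sum_empMean hn, Finset.sum_const, Finset.card_range,
    vmv_smul_left, vmv_smul_right, ← hm]
  rw [← Nat.cast_smul_eq_nsmul ℝ n (vecMulVec m m)]
  abel

lemma empCov_eq {d n : ℕ} (hn : n ≠ 0) (δ : ℝ) (x : ℕ → Fin d → ℝ) :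
    empCov d n δ x
      = ((n : ℝ) - 1)⁻¹ •
          ((∑ i ∈ Finset.range n, Matrix.vecMulVec (x i) (x i))
            - (n : ℝ) • Matrix.vecMulVec (empMean d n x) (empMean d n x)) + δ • 1 := by
  unfold empCov
  rw [sum_centered hn]

lemma mean_diff {d n : ℕ} (hn : n ≠ 0) (x : ℕ → Fin d → ℝ) :
    empMean d (n + 1) x - empMean d n x
      = ((n : ℝ) + 1)⁻¹ • (x n - empMean d n x) := by
  have hN : (n : ℝ) + 1 ≠ 0 := by positivity
  rw [empMean, Finset.sum_range_succ, sum_empMean hn, Nat.cast_add, Nat.cast_one]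
  match_scalars
  · field_simp; ring
  · field_simp

lemma eucNorm_empMean_le {d k : ℕ} (hk : k ≠ 0) {R : ℝ} {x : ℕ → Fin d → ℝ}
    (hx : ∀ i ∈ Finset.range k, eucNorm (x i) ≤ R) : eucNorm (empMean d k x) ≤ R := by
  have hk0 : 0 < (k : ℝ) := by exact_mod_cast Nat.pos_of_ne_zero hk
  unfold empMean
  rw [eucNorm_smul, abs_of_pos (by positivity)]
  calc (k : ℝ)⁻¹ * eucNorm (∑ i ∈ Finset.range k, x i)
      ≤ (k : ℝ)⁻¹ * ∑ i ∈ Finset.range k, eucNorm (x i) := by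
        gcongr; exact eucNorm_sum_le _ _
    _ ≤ (k : ℝ)⁻¹ * ∑ i ∈ Finset.range k, R :=
        mul_le_mul_of_nonneg_left (Finset.sum_le_sum hx) (by positivity)
    _ = (k : ℝ)⁻¹ * ((k : ℝ) * R) := by rw [Finset.sum_const, Finset.card_range,
        nsmul_eq_mul]
    _ = R := by field_simp

theorem empirical_cov_increment_bound (R : ℝ) (hR : 0 < R) :
    ∃ c > 0, ∀ (d n : ℕ), 2 ≤ n → ∀ δ : ℝ, 0 ≤ δ →
      ∀ x : ℕ → Fin d → ℝ, (∀ i ∈ Finset.range (n + 1), eucNorm (x i) ≤ R) →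
        opNorm (empCov d (n + 1) δ x - empCov d n δ x) ≤ c / n := by
  refine ⟨10 * R ^ 2, by positivity, fun d n hn δ hδ x hx => ?_⟩
  have hn0 : n ≠ 0 := by omega
  have hN2 : (2 : ℝ) ≤ (n : ℝ) := by exact_mod_cast hn
  have hNpos : (0 : ℝ) < n := by linarith
  have hN : (n : ℝ) ≠ 0 := ne_of_gt hNpos
  have hN1pos : (0 : ℝ) < (n : ℝ) - 1 := by linarith
  have hN1 : (n : ℝ) - 1 ≠ 0 := ne_of_gt hN1pos
  have hNp1 : (n : ℝ) + 1 ≠ 0 := by positivity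
  set m : Fin d → ℝ := empMean d n x with hm
  set m' : Fin d → ℝ := empMean d (n + 1) x with hm'
  set S : Matrix (Fin d) (Fin d) ℝ :=
    ∑ i ∈ Finset.range n, Matrix.vecMulVec (x i) (x i) with hS
  -- norm bounds on the vectors
  have hxn : eucNorm (x n) ≤ R := hx n (Finset.mem_range.2 (Nat.lt_succ_self n))
  have hmR : eucNorm m ≤ R :=
    eucNorm_empMean_le hn0 fun i hi => hx i (Finset.mem_range.2 (by
      exact Nat.lt_succ_of_lt (Finset.mem_range.1 hi)))
  have hm'R : eucNorm m' ≤ R := eucNorm_empMean_le (Nat.succ_ne_zero n) hx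
  have hu : eucNorm (m' - m) ≤ 2 * R / n := by
    rw [hm', hm, mean_diff hn0, eucNorm_smul, abs_of_pos (by positivity)]
    have h3 : ((n : ℝ) + 1)⁻¹ ≤ (n : ℝ)⁻¹ := by
      rw [inv_le_inv₀ (by positivity) (by positivity)]; linarith
    have h2 : eucNorm (x n - empMean d n x) ≤ R + R :=
      (eucNorm_sub_le _ _).trans (add_le_add hxn (hm ▸ hmR))
    calc ((n : ℝ) + 1)⁻¹ * eucNorm (x n - empMean d n x)
        ≤ (n : ℝ)⁻¹ * (R + R) :=
          mul_le_mul h3 h2 (eucNorm_nonneg _) (by positivity)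
      _ = 2 * R / n := by ring
  -- the key algebraic identity
  have key : empCov d (n + 1) δ x - empCov d n δ x
      = (n : ℝ)⁻¹ • Matrix.vecMulVec (x n) (x n)
        + ((n : ℝ)⁻¹ - ((n : ℝ) - 1)⁻¹) • S
        - Matrix.vecMulVec m' (m' - m) - Matrix.vecMulVec (m' - m) m
        - (n : ℝ)⁻¹ • Matrix.vecMulVec m' m'
        + ((n : ℝ) - 1)⁻¹ • Matrix.vecMulVec m m := by
    rw [empCov_eq (show n + 1 ≠ 0 by omega) δ x, empCov_eq hn0 δ x,
      Finset.sum_range_succ, ← hm, ← hm', ← hS, vmv_sub_right, vmv_sub_left]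
    push_cast
    match_scalars <;> field_simp <;> ring_nf <;> field_simp <;> ring
  rw [opNorm_eq, key]
  have hR2 : (0 : ℝ) ≤ R := le_of_lt hR
  have hvv : ∀ (y z : Fin d → ℝ), eucNorm y ≤ R → eucNorm z ≤ R →
      ‖Matrix.vecMulVec y z‖ ≤ R ^ 2 := by
    intro y z hy hz
    refine (norm_vecMulVec_le _ _).trans ?_
    have h1 := eucNorm_nonneg y
    have h2 := eucNorm_nonneg z
    nlinarith
  have b1 : ‖(n : ℝ)⁻¹ • Matrix.vecMulVec (x n) (x n)‖ ≤ R ^ 2 / n := by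
    rw [norm_smul, Real.norm_eq_abs, abs_of_pos (by positivity)]
    calc (n : ℝ)⁻¹ * ‖Matrix.vecMulVec (x n) (x n)‖
        ≤ (n : ℝ)⁻¹ * R ^ 2 :=
          mul_le_mul_of_nonneg_left (hvv _ _ hxn hxn) (by positivity)
      _ = R ^ 2 / n := by ring
  have hSb : ‖S‖ ≤ (n : ℝ) * R ^ 2 := by
    rw [hS]
    calc ‖∑ i ∈ Finset.range n, Matrix.vecMulVec (x i) (x i)‖
        ≤ ∑ i ∈ Finset.range n, ‖Matrix.vecMulVec (x i) (x i)‖ := norm_sum_le _ _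
      _ ≤ ∑ i ∈ Finset.range n, R ^ 2 := by
          refine Finset.sum_le_sum fun i hi => ?_
          have hxi : eucNorm (x i) ≤ R := hx i (Finset.mem_range.2
            (Nat.lt_succ_of_lt (Finset.mem_range.1 hi)))
          exact hvv _ _ hxi hxi
      _ = (n : ℝ) * R ^ 2 := by rw [Finset.sum_const, Finset.card_range, nsmul_eq_mul]
  have b2 : ‖((n : ℝ)⁻¹ - ((n : ℝ) - 1)⁻¹) • S‖ ≤ 2 * R ^ 2 / n := by
    rw [norm_smul, Real.norm_eq_abs]
    have habs : |(n : ℝ)⁻¹ - ((n : ℝ) - 1)⁻¹| = ((n : ℝ) * ((n : ℝ) - 1))⁻¹ := by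
      have h : (n : ℝ)⁻¹ - ((n : ℝ) - 1)⁻¹ = -(((n : ℝ) * ((n : ℝ) - 1))⁻¹) := by
        field_simp; ring
      rw [h, abs_neg, abs_of_pos (by positivity)]
    rw [habs]
    calc ((n : ℝ) * ((n : ℝ) - 1))⁻¹ * ‖S‖
        ≤ ((n : ℝ) * ((n : ℝ) - 1))⁻¹ * ((n : ℝ) * R ^ 2) :=
          mul_le_mul_of_nonneg_left hSb (by positivity)
      _ = R ^ 2 / ((n : ℝ) - 1) := by field_simp
      _ ≤ 2 * R ^ 2 / n := by
          rw [div_le_div_iff₀ hN1pos hNpos]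
          nlinarith
  have b3 : ‖Matrix.vecMulVec m' (m' - m)‖ ≤ 2 * R ^ 2 / n := by
    refine (norm_vecMulVec_le _ _).trans ?_
    have h2 := eucNorm_nonneg (m' - m)
    calc eucNorm m' * eucNorm (m' - m) ≤ R * (2 * R / n) :=
          mul_le_mul hm'R hu h2 hR2
      _ = 2 * R ^ 2 / n := by ring
  have b4 : ‖Matrix.vecMulVec (m' - m) m‖ ≤ 2 * R ^ 2 / n := by
    refine (norm_vecMulVec_le _ _).trans ?_
    have h2 := eucNorm_nonneg (m' - m)
    calc eucNorm (m' - m) * eucNorm m ≤ (2 * R / n) * R :=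
          mul_le_mul hu hmR (eucNorm_nonneg _) (by positivity)
      _ = 2 * R ^ 2 / n := by ring
  have b5 : ‖(n : ℝ)⁻¹ • Matrix.vecMulVec m' m'‖ ≤ R ^ 2 / n := by
    rw [norm_smul, Real.norm_eq_abs, abs_of_pos (by positivity)]
    calc (n : ℝ)⁻¹ * ‖Matrix.vecMulVec m' m'‖
        ≤ (n : ℝ)⁻¹ * R ^ 2 :=
          mul_le_mul_of_nonneg_left (hvv _ _ hm'R hm'R) (by positivity)
      _ = R ^ 2 / n := by ring
  have b6 : ‖((n : ℝ) - 1)⁻¹ • Matrix.vecMulVec m m‖ ≤ 2 * R ^ 2 / n := by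
    rw [norm_smul, Real.norm_eq_abs, abs_of_pos (by positivity)]
    have h7 : ((n : ℝ) - 1)⁻¹ ≤ 2 / (n : ℝ) := by
      rw [inv_eq_one_div, div_le_div_iff₀ hN1pos hNpos]
      linarith
    calc ((n : ℝ) - 1)⁻¹ * ‖Matrix.vecMulVec m m‖
        ≤ (2 / (n : ℝ)) * R ^ 2 :=
          mul_le_mul h7 (hvv _ _ hmR hmR) (norm_nonneg _) (by positivity)
      _ = 2 * R ^ 2 / n := by ring
  set X1 := (n : ℝ)⁻¹ • Matrix.vecMulVec (x n) (x n)
  set X2 := ((n : ℝ)⁻¹ - ((n : ℝ) - 1)⁻¹) • S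
  set X3 := Matrix.vecMulVec m' (m' - m)
  set X4 := Matrix.vecMulVec (m' - m) m
  set X5 := (n : ℝ)⁻¹ • Matrix.vecMulVec m' m'
  set X6 := ((n : ℝ) - 1)⁻¹ • Matrix.vecMulVec m m
  have tri : ‖X1 + X2 - X3 - X4 - X5 + X6‖
      ≤ ‖X1‖ + ‖X2‖ + ‖X3‖ + ‖X4‖ + ‖X5‖ + ‖X6‖ := by
    calc ‖X1 + X2 - X3 - X4 - X5 + X6‖ ≤ ‖X1 + X2 - X3 - X4 - X5‖ + ‖X6‖ := norm_add_le _ _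
      _ ≤ (‖X1 + X2 - X3 - X4‖ + ‖X5‖) + ‖X6‖ :=
          add_le_add_left (norm_sub_le _ _) _
      _ ≤ ((‖X1 + X2 - X3‖ + ‖X4‖) + ‖X5‖) + ‖X6‖ :=
          add_le_add_left (add_le_add_left (norm_sub_le _ _) _) _
      _ ≤ (((‖X1 + X2‖ + ‖X3‖) + ‖X4‖) + ‖X5‖) + ‖X6‖ :=
          add_le_add_left (add_le_add_left (add_le_add_left (norm_sub_le _ _) _) _) _
      _ ≤ ((((‖X1‖ + ‖X2‖) + ‖X3‖) + ‖X4‖) + ‖X5‖) + ‖X6‖ :=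
          add_le_add_left (add_le_add_left (add_le_add_left
            (add_le_add_left (norm_add_le _ _) _) _) _) _
      _ = ‖X1‖ + ‖X2‖ + ‖X3‖ + ‖X4‖ + ‖X5‖ + ‖X6‖ := by ring
  calc ‖X1 + X2 - X3 - X4 - X5 + X6‖ ≤ ‖X1‖ + ‖X2‖ + ‖X3‖ + ‖X4‖ + ‖X5‖ + ‖X6‖ := tri
    _ ≤ R ^ 2 / n + 2 * R ^ 2 / n + 2 * R ^ 2 / n + 2 * R ^ 2 / n + R ^ 2 / n
        + 2 * R ^ 2 / n := by
        exact add_le_add (add_le_add (add_le_add (add_le_add (add_le_add b1 b2) b3) b4) b5) b6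
    _ = 10 * R ^ 2 / n := by ring
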